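/- Let k ≥ 1, C ≥ 1, n ≥ 0 be integers and let p_1,...,p_k be nonnegative reals with Σ_i p_i = 1. For n i.i.d. draws from the categorical distribution with probabilities p_1,...,p_k, let X_i be the number of draws equal to i. Then the probability that no bin is full, P(X_i < C for all i) = Σ_{f : {1,...,n} → {1,...,k}, #f^{-1}(i) ≤ C−1 ∀i} ∏_{m=1}^n p_{f(m)}, is maximized over all probability vectors (p_1,...,p_k) by the uniform distribution p_1 = ⋯ = p_k = 1/k; that is, it is at most Σ_{f : #f^{-1}(i) ≤ C−1 ∀i} (1/k)^n. -/

import Mathlib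

open MeasureTheory ProbabilityTheory

/-- The number of the `n` draws `D 0, ..., D (n-1)` that land in bin `i`. -/
def binCount {Ω : Type*} (n k : ℕ) (D : Fin n → Ω → Fin k) (i : Fin k) (ω : Ω) : ℕ :=
  (Finset.univ.filter fun m => D m ω = i).card

/-- Upper tail of the binomial expansion. -/
noncomputable def Gtail (t C : ℕ) (u v : ℝ) : ℝ :=
  ∑ a ∈ Finset.Icc C t, (t.choose a : ℝ) * u ^ a * v ^ (t - a)

lemma Gtail_hasDerivAt (t C : ℕ) (hC : 1 ≤ C) (hCt : C ≤ t) (s x : ℝ) :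
    HasDerivAt (fun y => Gtail t C y (s - y))
      ((t : ℝ) * ((t-1).choose (C-1)) * (x ^ (C-1) * (s - x) ^ (t - C))) x := by
  set φ : ℕ → ℝ := fun c => (t : ℝ) * ((t-1).choose c) * (x ^ c * (s - x) ^ ((t-1) - c)) with hφ
  have key : ∀ a ∈ Finset.Icc C t,
      HasDerivAt (fun y => (t.choose a : ℝ) * y ^ a * (s - y) ^ (t - a))
        (φ (a-1) - φ a) x := by
    intro a ha
    simp only [Finset.mem_Icc] at ha
    have h1 : HasDerivAt (fun y : ℝ => y ^ a) (a * x ^ (a - 1)) x := hasDerivAt_pow a x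
    have h2 : HasDerivAt (fun y : ℝ => (s - y) ^ (t - a))
        ((((t - a : ℕ) : ℝ) * (s - x) ^ (t - a - 1)) * (-1)) x :=
      (((hasDerivAt_id x).const_sub s).pow (t - a))
    have h3 := (h1.mul h2).const_mul (t.choose a : ℝ)
    have h3' : HasDerivAt (fun y => (t.choose a : ℝ) * y ^ a * (s - y) ^ (t - a))
        ((t.choose a : ℝ) * ((a : ℝ) * x ^ (a - 1) * (s - x) ^ (t - a)
          + x ^ a * (((t - a : ℕ) : ℝ) * (s - x) ^ (t - a - 1) * (-1)))) x := by
      simpa [mul_assoc] using h3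
    have e1 : ((t.choose a : ℝ)) * (a : ℝ) = (t : ℝ) * ((t-1).choose (a-1) : ℝ) := by
      have h : t * (t-1).choose (a-1) = t.choose a * a := by
        have h := Nat.add_one_mul_choose_eq (t-1) (a-1)
        have ht : (t-1) + 1 = t := by omega
        have haa : (a-1) + 1 = a := by omega
        rwa [ht, haa] at h
      exact_mod_cast (congrArg (fun z : ℕ => (z : ℝ)) h.symm)
    have e2 : ((t.choose a : ℝ)) * ((t - a : ℕ) : ℝ) = (t : ℝ) * ((t-1).choose a : ℝ) := by
      have h : (t-1).choose a * t = t.choose a * (t - a) := by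
        have h := Nat.choose_mul_succ_eq (t-1) a
        have ht : (t-1) + 1 = t := by omega
        rwa [ht] at h
      calc (t.choose a : ℝ) * ((t - a : ℕ) : ℝ)
            = ((t.choose a * (t - a) : ℕ) : ℝ) := by push_cast; ring
        _ = (((t-1).choose a * t : ℕ) : ℝ) := by rw [h]
        _ = (t : ℝ) * ((t-1).choose a : ℝ) := by push_cast; ring
    have e3 : (t : ℕ) - a = (t-1) - (a-1) := by omega
    have e4 : t - a - 1 = (t-1) - a := by omega
    have hval : (t.choose a : ℝ) * ((a : ℝ) * x ^ (a - 1) * (s - x) ^ (t - a)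
          + x ^ a * (((t - a : ℕ) : ℝ) * (s - x) ^ (t - a - 1) * (-1)))
        = φ (a-1) - φ a := by
      rw [hφ]
      simp only
      rw [← e3, ← e4, ← e1, ← e2]
      ring
    rw [← hval]
    exact h3'
  have hsum := HasDerivAt.fun_sum key
  have reindex : ∑ a ∈ Finset.Icc C t, (φ (a-1) - φ a) = φ (C-1) - φ t := by
    rw [show Finset.Icc C t = Finset.Ico C (t+1) by rw [Finset.Ico_add_one_right_eq_Icc]]
    rw [Finset.sum_Ico_eq_sum_range]
    have : ∀ i ∈ Finset.range (t + 1 - C), φ (C + i - 1) - φ (C + i)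
        = (fun i => φ (C - 1 + i)) i - (fun i => φ (C - 1 + i)) (i+1) := by
      intro i _
      simp only
      congr 2 <;> omega
    rw [Finset.sum_congr rfl this, Finset.sum_range_sub']
    show φ (C - 1 + 0) - φ (C - 1 + (t + 1 - C)) = φ (C - 1) - φ t
    congr 2 <;> omega
  rw [reindex] at hsum
  have hz : φ t = 0 := by
    rw [hφ]; simp only
    rw [Nat.choose_eq_zero_of_lt (by omega)]
    simp
  have e5 : (t-1) - (C-1) = t - C := by omega
  rw [hz, sub_zero, hφ] at hsum
  simp only [e5] at hsum
  exact hsum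

/-- The "window" sum: truncated binomial expansion with both tails cut at `C`. -/
noncomputable def Wsum (t C : ℕ) (u v : ℝ) : ℝ :=
  ∑ a ∈ (Finset.range (t+1)).filter (fun a => a < C ∧ t - a < C),
    (t.choose a : ℝ) * u ^ a * v ^ (t - a)

lemma Wsum_full (t C : ℕ) (htC : t < C) (u v : ℝ) : Wsum t C u v = (u + v) ^ t := by
  rw [Wsum, Finset.filter_true_of_mem (fun a ha => by
    simp only [Finset.mem_range] at ha; omega), add_pow]
  exact Finset.sum_congr rfl fun a _ => by ring

lemma Wsum_empty (t C : ℕ) (htC : 2*C - 1 ≤ t) (hC : 1 ≤ C) (u v : ℝ) : Wsum t C u v = 0 := by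
  rw [Wsum, Finset.filter_false_of_mem, Finset.sum_empty]
  intro a ha
  simp only [Finset.mem_range] at ha
  omega

lemma Wsum_eq (t C : ℕ) (hC : 1 ≤ C) (hCt : C ≤ t) (htC : t ≤ 2*C - 2) (u v : ℝ) :
    Wsum t C u v = (u + v) ^ t - Gtail t C u v - Gtail t C v u := by
  have hsplit := Finset.sum_filter_add_sum_filter_not (Finset.range (t+1))
    (fun a => a < C ∧ t - a < C) (fun a => (t.choose a : ℝ) * u ^ a * v ^ (t - a))
  have hset : (Finset.range (t+1)).filter (fun a => ¬(a < C ∧ t - a < C))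
      = Finset.Icc C t ∪ Finset.range (t + 1 - C) := by
    ext a
    simp only [Finset.mem_filter, Finset.mem_range, Finset.mem_union, Finset.mem_Icc]
    omega
  have hdisj : Disjoint (Finset.Icc C t) (Finset.range (t + 1 - C)) := by
    rw [Finset.disjoint_left]
    intro a ha hb
    simp only [Finset.mem_Icc] at ha
    simp only [Finset.mem_range] at hb
    omega
  have hlow : ∑ a ∈ Finset.range (t + 1 - C), (t.choose a : ℝ) * u ^ a * v ^ (t - a)
      = Gtail t C v u := by
    rw [Gtail]
    refine Finset.sum_nbij' (fun a => t - a) (fun a => t - a) ?_ ?_ ?_ ?_ ?_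
    · intro a ha
      simp only [Finset.mem_range] at ha
      simp only [Finset.mem_Icc]
      omega
    · intro a ha
      simp only [Finset.mem_Icc] at ha
      simp only [Finset.mem_range]
      omega
    · intro a ha
      simp only [Finset.mem_range] at ha
      show t - (t - a) = a
      omega
    · intro a ha
      simp only [Finset.mem_Icc] at ha
      show t - (t - a) = a
      omega
    · intro a ha
      simp only [Finset.mem_range] at ha
      have h1 : t - (t - a) = a := by omega
      rw [h1, Nat.choose_symm (by omega)]
      ring
  have hpow : ∑ a ∈ Finset.range (t+1), (t.choose a : ℝ) * u ^ a * v ^ (t - a)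
      = (u + v) ^ t := by
    rw [add_pow]
    exact Finset.sum_congr rfl fun a _ => by ring
  rw [hset, Finset.sum_union hdisj, hlow] at hsplit
  rw [hpow] at hsplit
  rw [Wsum]
  have : ∑ a ∈ Finset.Icc C t, (t.choose a : ℝ) * u ^ a * v ^ (t - a) = Gtail t C u v := rfl
  rw [this] at hsplit
  linarith

lemma Wsum_mono (t C : ℕ) (hC : 1 ≤ C) (u v u' v' : ℝ) (h0 : 0 ≤ u)
    (h1 : u ≤ u') (h2 : u' ≤ v') (h3 : v' ≤ v) (hs : u + v = u' + v') :
    Wsum t C u v ≤ Wsum t C u' v' := by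
  rcases lt_or_ge t C with htC | hCt
  · rw [Wsum_full t C htC, Wsum_full t C htC, hs]
  rcases le_or_gt (2*C - 1) t with htC2 | htC2
  · rw [Wsum_empty t C htC2 hC, Wsum_empty t C htC2 hC]
  have htC : t ≤ 2*C - 2 := by omega
  obtain ⟨s, hsdef⟩ : ∃ s : ℝ, s = u + v := ⟨u + v, rfl⟩
  have hs0 : 0 ≤ s := by have : 0 ≤ v := by linarith
                         linarith
  have hanti : AntitoneOn (fun y => Gtail t C y (s - y) + Gtail t C (s - y) y)
      (Set.Icc (0:ℝ) (s/2)) := by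
    have hderiv : ∀ y : ℝ, HasDerivAt (fun y => Gtail t C y (s - y) + Gtail t C (s - y) y)
        ((t : ℝ) * ((t-1).choose (C-1)) * (y ^ (C-1) * (s - y) ^ (t - C))
          - (t : ℝ) * ((t-1).choose (C-1)) * ((s - y) ^ (C-1) * y ^ (t - C))) y := by
      intro y
      have hK := Gtail_hasDerivAt t C hC hCt s y
      have hin : HasDerivAt (fun y : ℝ => s - y) (-1) y := (hasDerivAt_id y).const_sub s
      have hcomp := ((Gtail_hasDerivAt t C hC hCt s (s - y)).comp y hin)
      have hfun : ((fun z => Gtail t C z (s - z)) ∘ (fun y : ℝ => s - y))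
          = (fun y : ℝ => Gtail t C (s - y) y) := by
        funext z
        show Gtail t C (s - z) (s - (s - z)) = Gtail t C (s - z) z
        rw [show s - (s - z) = z by ring]
      rw [hfun] at hcomp
      have hK2 : HasDerivAt (fun y : ℝ => Gtail t C (s - y) y)
          (-((t : ℝ) * ((t-1).choose (C-1)) * ((s - y) ^ (C-1) * y ^ (t - C)))) y := by
        refine hcomp.congr_deriv ?_
        rw [show s - (s - y) = y by ring]
        ring
      have := hK.add hK2
      refine this.congr_deriv ?_
      all_goals ring
    apply antitoneOn_of_deriv_nonpos (convex_Icc _ _)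
    · exact fun y _ => ((hderiv y).continuousAt).continuousWithinAt
    · intro y _
      exact ((hderiv y).differentiableAt).differentiableWithinAt
    · intro y hy
      rw [interior_Icc] at hy
      rw [(hderiv y).deriv]
      have hy1 : 0 < y := hy.1
      have hy2 : y < s - y := by have := hy.2; linarith
      have hnn : (0:ℝ) ≤ (t : ℝ) * ((t-1).choose (C-1)) := by positivity
      have hle : y ^ (C-1) * (s - y) ^ (t - C) ≤ (s - y) ^ (C-1) * y ^ (t - C) := by
        have hd : C - 1 = (t - C) + (2*C - 1 - t) := by omega
        rw [hd, pow_add, pow_add]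
        have h1' : y ^ (2*C-1-t) ≤ (s - y) ^ (2*C-1-t) :=
          pow_le_pow_left₀ (le_of_lt hy1) (le_of_lt hy2) _
        have hyp : (0:ℝ) ≤ y ^ (t-C) := pow_nonneg hy1.le _
        have hsp : (0:ℝ) ≤ (s - y) ^ (t-C) := pow_nonneg (by linarith) _
        calc y ^ (t-C) * y ^ (2*C-1-t) * (s - y) ^ (t-C)
            ≤ y ^ (t-C) * (s - y) ^ (2*C-1-t) * (s - y) ^ (t-C) := by
              apply mul_le_mul_of_nonneg_right _ hsp
              exact mul_le_mul_of_nonneg_left h1' hyp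
          _ = (s - y) ^ (t-C) * (s - y) ^ (2*C-1-t) * y ^ (t-C) := by ring
      nlinarith [mul_le_mul_of_nonneg_left hle hnn]
  have hu_mem : u ∈ Set.Icc (0:ℝ) (s/2) := ⟨h0, by rw [hsdef]; linarith⟩
  have hu'_mem : u' ∈ Set.Icc (0:ℝ) (s/2) := ⟨by linarith, by rw [hsdef]; linarith⟩
  have hmono := hanti hu_mem hu'_mem h1
  simp only at hmono
  have hv : v = s - u := by rw [hsdef]; ring
  have hv' : v' = s - u' := by rw [hsdef]; linarith
  rw [Wsum_eq t C hC hCt htC, Wsum_eq t C hC hCt htC, hv, hv',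
    show u + (s - u) = s by ring, show u' + (s - u') = s by ring]
  linarith

noncomputable def Fsum (n k C : ℕ) (p : Fin k → ℝ) : ℝ :=
  ∑ f ∈ (Finset.univ : Finset (Fin n → Fin k)).filter
      (fun f => ∀ i, (Finset.univ.filter fun m => f m = i).card < C),
    ∏ m, p (f m)

lemma powerset_sum {α : Type*} [DecidableEq α] (T : Finset α) (C : ℕ) (x y : ℝ) :
    ∑ S ∈ T.powerset.filter (fun S => S.card < C ∧ T.card - S.card < C),
      x ^ S.card * y ^ (T.card - S.card) = Wsum T.card C x y := by
  rw [Finset.sum_filter, Finset.powerset_card_disjiUnion]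
  refine (Finset.sum_disjiUnion _ _ _).trans ?_
  rw [Wsum,
    Finset.sum_filter]
  apply Finset.sum_congr rfl
  intro c hc
  have hcongr : ∀ S ∈ T.powersetCard c,
      (if S.card < C ∧ T.card - S.card < C then x ^ S.card * y ^ (T.card - S.card) else 0)
        = (if c < C ∧ T.card - c < C then x ^ c * y ^ (T.card - c) else 0) := by
    intro S hS
    rw [(Finset.mem_powersetCard.mp hS).2]
  rw [Finset.sum_congr rfl hcongr, Finset.sum_const, Finset.card_powersetCard, nsmul_eq_mul]
  split_ifs
  · ring
  · rw [mul_zero]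

lemma F_decomp (n k C : ℕ) (p : Fin k → ℝ) (i j : Fin k) (hij : i ≠ j) :
    Fsum n k C p
      = ∑ g : Fin n → Fin k,
          if (∀ m, g m ≠ i) ∧ (∀ l, l ≠ i → l ≠ j →
              (Finset.univ.filter fun m => g m = l).card < C) then
            (∏ m ∈ Finset.univ.filter (fun m => g m ≠ j), p (g m)) *
              Wsum (Finset.univ.filter fun m => g m = j).card C (p i) (p j)
          else 0 := by
  classical
  have stepA : Fsum n k C p = ∑ gS ∈ (Finset.univ.filter
      (fun gS : (Fin n → Fin k) × Finset (Fin n) =>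
        ((∀ m, gS.1 m ≠ i) ∧ (∀ l, l ≠ i → l ≠ j →
          (Finset.univ.filter fun m => gS.1 m = l).card < C)) ∧
        gS.2 ⊆ Finset.univ.filter (fun m => gS.1 m = j) ∧ gS.2.card < C ∧
        (Finset.univ.filter (fun m => gS.1 m = j)).card - gS.2.card < C)),
      p i ^ gS.2.card * p j ^ ((Finset.univ.filter (fun m => gS.1 m = j)).card - gS.2.card) *
        ∏ m ∈ Finset.univ.filter (fun m => gS.1 m ≠ j), p (gS.1 m) := by
    rw [Fsum]
    symm
    refine Finset.sum_nbij' (fun gS => fun m => if m ∈ gS.2 then i else gS.1 m)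
      (fun f => (fun m => if f m = i then j else f m, Finset.univ.filter (fun m => f m = i)))
      ?_ ?_ ?_ ?_ ?_
    · -- maps B into A
      rintro ⟨g, S⟩ hgS
      simp only [Finset.mem_filter, Finset.mem_univ, true_and] at hgS
      obtain ⟨⟨hgi, hgl⟩, hsub, hS, hTS⟩ := hgS
      simp only [Finset.mem_filter, Finset.mem_univ, true_and]
      have h5 : (Finset.univ.filter fun m => (if m ∈ S then i else g m) = i) = S := by
        ext m
        simp only [Finset.mem_filter, Finset.mem_univ, true_and]
        by_cases hm : m ∈ S <;> simp [hm, hgi m]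
      have h6 : (Finset.univ.filter fun m => (if m ∈ S then i else g m) = j)
          = (Finset.univ.filter fun m => g m = j) \ S := by
        ext m
        simp only [Finset.mem_filter, Finset.mem_univ, true_and, Finset.mem_sdiff]
        by_cases hm : m ∈ S
        · simp [hm, hij]
        · simp [hm]
      have h7 : ∀ l, l ≠ i → l ≠ j →
          (Finset.univ.filter fun m => (if m ∈ S then i else g m) = l)
            = (Finset.univ.filter fun m => g m = l) := by
        intro l hli hlj
        ext m
        simp only [Finset.mem_filter, Finset.mem_univ, true_and]
        by_cases hm : m ∈ S
        · have : g m = j := by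
            have := hsub hm
            simpa [Finset.mem_filter] using this
          simp [hm, this, Ne.symm hli, Ne.symm hlj]
        · simp [hm]
      intro l
      rcases eq_or_ne l i with rfl | hli
      · rw [h5]; exact hS
      rcases eq_or_ne l j with rfl | hlj
      · rw [h6, Finset.card_sdiff_of_subset hsub]; exact hTS
      · rw [h7 l hli hlj]; exact hgl l hli hlj
    · -- maps A into B
      intro f hf
      simp only [Finset.mem_filter, Finset.mem_univ, true_and] at hf
      simp only [Finset.mem_filter, Finset.mem_univ, true_and]
      have hTg : (Finset.univ.filter fun m => (if f m = i then j else f m) = j)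
          = (Finset.univ.filter fun m => f m = i) ∪ (Finset.univ.filter fun m => f m = j) := by
        ext m
        simp only [Finset.mem_filter, Finset.mem_univ, true_and, Finset.mem_union]
        by_cases hm : f m = i <;> simp [hm]
      have hdisj : Disjoint (Finset.univ.filter fun m => f m = i)
          (Finset.univ.filter fun m => f m = j) := by
        rw [Finset.disjoint_left]
        intro m hm1 hm2
        simp only [Finset.mem_filter, Finset.mem_univ, true_and] at hm1 hm2
        exact hij (hm1 ▸ hm2 ▸ rfl : i = j)
      have hcardU : (Finset.univ.filter fun m => (if f m = i then j else f m) = j).card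
          = (Finset.univ.filter fun m => f m = i).card
            + (Finset.univ.filter fun m => f m = j).card := by
        rw [hTg, Finset.card_union_of_disjoint hdisj]
      refine ⟨⟨?_, ?_⟩, ?_, hf i, ?_⟩
      · intro m
        by_cases hm : f m = i <;> simp [hm, Ne.symm hij]
      · intro l hli hlj
        have : (Finset.univ.filter fun m => (if f m = i then j else f m) = l)
            = (Finset.univ.filter fun m => f m = l) := by
          ext m
          simp only [Finset.mem_filter, Finset.mem_univ, true_and]
          by_cases hm : f m = i
          · simp [hm, Ne.symm hlj, Ne.symm hli]
          · simp [hm]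
        rw [this]; exact hf l
      · intro m hm
        simp only [Finset.mem_filter, Finset.mem_univ, true_and] at hm ⊢
        simp [hm]
      · rw [hcardU]
        have := hf j
        omega
    · -- left inverse
      rintro ⟨g, S⟩ hgS
      simp only [Finset.mem_filter, Finset.mem_univ, true_and] at hgS
      obtain ⟨⟨hgi, hgl⟩, hsub, hS, hTS⟩ := hgS
      have h1 : (fun m => if (if m ∈ S then i else g m) = i then j
          else (if m ∈ S then i else g m)) = g := by
        funext m
        by_cases hm : m ∈ S
        · have : g m = j := by
            have := hsub hm
            simpa [Finset.mem_filter] using this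
          simp [hm, this]
        · simp [hm, hgi m]
      have h2 : (Finset.univ.filter fun m => (if m ∈ S then i else g m) = i) = S := by
        ext m
        simp only [Finset.mem_filter, Finset.mem_univ, true_and]
        by_cases hm : m ∈ S <;> simp [hm, hgi m]
      exact Prod.ext h1 h2
    · -- right inverse
      intro f hf
      funext m
      by_cases hm : f m = i
      · simp [hm, Finset.mem_filter]
      · simp [hm, Finset.mem_filter]
    · -- summand
      rintro ⟨g, S⟩ hgS
      simp only [Finset.mem_filter, Finset.mem_univ, true_and] at hgS
      obtain ⟨⟨hgi, hgl⟩, hsub, hS, hTS⟩ := hgS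
      simp only
      rw [← Finset.prod_mul_prod_compl (Finset.univ.filter fun m => g m = j)
        (fun m => p (if m ∈ S then i else g m))]
      have hcompl : (Finset.univ.filter fun m => g m = j)ᶜ
          = Finset.univ.filter (fun m => g m ≠ j) := by
        ext m
        simp [Finset.mem_compl, Finset.mem_filter]
      have hc : ∏ m ∈ (Finset.univ.filter fun m => g m = j)ᶜ,
          p (if m ∈ S then i else g m) = ∏ m ∈ Finset.univ.filter (fun m => g m ≠ j), p (g m) := by
        rw [hcompl]
        apply Finset.prod_congr rfl
        intro m hm
        simp only [Finset.mem_filter, Finset.mem_univ, true_and] at hm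
        have hmS : m ∉ S := fun hmem => hm (by simpa [Finset.mem_filter] using hsub hmem)
        rw [if_neg hmS]
      have e1 : ∏ m ∈ S, p (if m ∈ S then i else g m) = p i ^ S.card := by
        rw [Finset.prod_congr rfl (fun m hm => by rw [if_pos hm]), Finset.prod_const]
      have e2 : ∏ m ∈ ((Finset.univ.filter fun m => g m = j) \ S),
          p (if m ∈ S then i else g m)
          = p j ^ ((Finset.univ.filter fun m => g m = j).card - S.card) := by
        rw [Finset.prod_congr rfl (fun m hm => ?_), Finset.prod_const,
          Finset.card_sdiff_of_subset hsub]
        rw [Finset.mem_sdiff] at hm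
        rw [if_neg hm.2]
        congr 1
        simpa [Finset.mem_filter] using hm.1
      have hT : ∏ m ∈ (Finset.univ.filter fun m => g m = j),
          p (if m ∈ S then i else g m)
          = p i ^ S.card * p j ^ ((Finset.univ.filter fun m => g m = j).card - S.card) := by
        have hu : ∏ m ∈ (Finset.univ.filter fun m => g m = j), p (if m ∈ S then i else g m)
            = ∏ m ∈ S ∪ ((Finset.univ.filter fun m => g m = j) \ S),
                p (if m ∈ S then i else g m) := by
          rw [Finset.union_sdiff_of_subset hsub]
        rw [hu, Finset.prod_union Finset.disjoint_sdiff, e1, e2]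
      rw [hc, hT]
  rw [stepA]
  rw [Finset.sum_finset_product _ Finset.univ
    (fun g => if (∀ m, g m ≠ i) ∧ (∀ l, l ≠ i → l ≠ j →
        (Finset.univ.filter fun m => g m = l).card < C) then
      ((Finset.univ.filter (fun m => g m = j)).powerset.filter
        (fun S => S.card < C ∧ (Finset.univ.filter (fun m => g m = j)).card - S.card < C))
      else ∅)
    (fun gS => by
      by_cases hg : (∀ m, gS.1 m ≠ i) ∧ (∀ l, l ≠ i → l ≠ j →
          (Finset.univ.filter fun m => gS.1 m = l).card < C)
      · simp only [Finset.mem_filter, Finset.mem_univ, true_and, if_pos hg,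
          Finset.mem_powerset]
        tauto
      · simp only [Finset.mem_filter, Finset.mem_univ, true_and, if_neg hg,
          Finset.notMem_empty]
        tauto)]
  apply Finset.sum_congr rfl
  intro g _
  by_cases hg : (∀ m, g m ≠ i) ∧ (∀ l, l ≠ i → l ≠ j →
      (Finset.univ.filter fun m => g m = l).card < C)
  · rw [if_pos hg, if_pos hg]
    simp only
    rw [mul_comm, ← powerset_sum (Finset.univ.filter (fun m => g m = j)) C (p i) (p j),
      Finset.sum_mul]
  · rw [if_neg hg, if_neg hg, Finset.sum_empty]

lemma Fsum_swap (n k C : ℕ) (hC : 1 ≤ C) (p : Fin k → ℝ) (hp0 : ∀ l, 0 ≤ p l)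
    (i j : Fin k) (hij : i ≠ j) (a b : ℝ)
    (h1 : p i ≤ a) (h2 : a ≤ b) (h3 : b ≤ p j) (hs : p i + p j = a + b) :
    Fsum n k C p ≤ Fsum n k C (Function.update (Function.update p i a) j b) := by
  classical
  set p' := Function.update (Function.update p i a) j b with hp'
  have hp'i : p' i = a := by
    rw [hp', Function.update_of_ne hij, Function.update_self]
  have hp'j : p' j = b := by
    rw [hp', Function.update_self]
  have hp'l : ∀ l, l ≠ i → l ≠ j → p' l = p l := by
    intro l hli hlj
    rw [hp', Function.update_of_ne hlj, Function.update_of_ne hli]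
  rw [F_decomp n k C p i j hij, F_decomp n k C p' i j hij]
  apply Finset.sum_le_sum
  intro g _
  by_cases hg : (∀ m, g m ≠ i) ∧ (∀ l, l ≠ i → l ≠ j →
      (Finset.univ.filter fun m => g m = l).card < C)
  · rw [if_pos hg, if_pos hg, hp'i, hp'j]
    have hpref : ∏ m ∈ Finset.univ.filter (fun m => g m ≠ j), p' (g m)
        = ∏ m ∈ Finset.univ.filter (fun m => g m ≠ j), p (g m) := by
      apply Finset.prod_congr rfl
      intro m hm
      simp only [Finset.mem_filter, Finset.mem_univ, true_and] at hm
      exact hp'l (g m) (hg.1 m) hm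
    rw [hpref]
    apply mul_le_mul_of_nonneg_left
    · exact Wsum_mono _ C hC (p i) (p j) a b (hp0 i) h1 h2 h3 hs
    · exact Finset.prod_nonneg fun m _ => hp0 _
  · rw [if_neg hg, if_neg hg]

lemma Fsum_balance (n k C : ℕ) (hk : 1 ≤ k) (hC : 1 ≤ C) :
    ∀ (N : ℕ) (p : Fin k → ℝ), (∀ l, 0 ≤ p l) → (∑ l, p l = 1) →
      (Finset.univ.filter (fun l => p l ≠ 1 / (k:ℝ))).card ≤ N →
      Fsum n k C p ≤ Fsum n k C (fun _ => 1 / (k:ℝ)) := by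
  intro N
  induction N with
  | zero =>
    intro p hp0 hp1 hcard
    have : ∀ l, p l = 1 / (k:ℝ) := by
      intro l
      by_contra hne
      have : l ∈ Finset.univ.filter (fun l => p l ≠ 1 / (k:ℝ)) := by
        simp only [Finset.mem_filter, Finset.mem_univ, true_and]
        exact hne
      have := Finset.card_pos.mpr ⟨l, this⟩
      omega
    have : p = fun _ => 1 / (k:ℝ) := funext this
    rw [this]
  | succ N ih =>
    intro p hp0 hp1 hcard
    by_cases hall : ∀ l, p l = 1 / (k:ℝ)
    · rw [funext hall]
    push_neg at hall
    obtain ⟨l₀, hl₀⟩ := hall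
    have hkpos : (0:ℝ) < (k:ℝ) := by exact_mod_cast hk
    have hexlt : ∃ i, p i < 1 / (k:ℝ) := by
      by_contra hno
      push_neg at hno
      have hsum : (1:ℝ) = ∑ _l : Fin k, (1 / (k:ℝ)) := by
        rw [Finset.sum_const, Finset.card_univ, Fintype.card_fin, nsmul_eq_mul]
        field_simp
      have : ∑ _l : Fin k, (1 / (k:ℝ)) < ∑ l, p l := by
        apply Finset.sum_lt_sum (fun l _ => hno l)
        exact ⟨l₀, Finset.mem_univ _, lt_of_le_of_ne (hno l₀) (Ne.symm hl₀)⟩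
      rw [hp1] at this
      linarith
    have hexgt : ∃ j, 1 / (k:ℝ) < p j := by
      by_contra hno
      push_neg at hno
      have hsum : (1:ℝ) = ∑ _l : Fin k, (1 / (k:ℝ)) := by
        rw [Finset.sum_const, Finset.card_univ, Fintype.card_fin, nsmul_eq_mul]
        field_simp
      have : ∑ l, p l < ∑ _l : Fin k, (1 / (k:ℝ)) := by
        apply Finset.sum_lt_sum (fun l _ => hno l)
        refine ⟨l₀, Finset.mem_univ _, lt_of_le_of_ne (hno l₀) hl₀⟩
      rw [hp1] at this
      linarith
    obtain ⟨i, hi⟩ := hexlt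
    obtain ⟨j, hj⟩ := hexgt
    have hij : i ≠ j := fun h => by rw [h] at hi; linarith
    set a : ℝ := min (1 / (k:ℝ)) (p i + p j - 1 / (k:ℝ)) with ha
    set b : ℝ := max (1 / (k:ℝ)) (p i + p j - 1 / (k:ℝ)) with hb
    have hab : a + b = p i + p j := by
      rw [ha, hb, min_add_max]
      ring
    have h1 : p i ≤ a := le_min hi.le (by linarith)
    have h2 : a ≤ b := min_le_max
    have h3 : b ≤ p j := max_le hj.le (by linarith)
    set p' := Function.update (Function.update p i a) j b with hp'
    have hp'i : p' i = a := by
      rw [hp', Function.update_of_ne hij, Function.update_self]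
    have hp'j : p' j = b := by
      rw [hp', Function.update_self]
    have hp'l : ∀ l, l ≠ i → l ≠ j → p' l = p l := by
      intro l hli hlj
      rw [hp', Function.update_of_ne hlj, Function.update_of_ne hli]
    have step := Fsum_swap n k C hC p hp0 i j hij a b h1 h2 h3 hab.symm
    have hp'0 : ∀ l, 0 ≤ p' l := by
      intro l
      rcases eq_or_ne l i with rfl | hli
      · rw [hp'i]; exact le_trans (hp0 _) h1
      rcases eq_or_ne l j with rfl | hlj
      · rw [hp'j]; exact le_trans (le_trans (hp0 i) h1) h2
      · rw [hp'l l hli hlj]; exact hp0 l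
    have hp'1 : ∑ l, p' l = 1 := by
      have e1 : ∑ l, p' l = b + ∑ l ∈ Finset.univ \ {j}, Function.update p i a l :=
        Finset.sum_update_of_mem (Finset.mem_univ j) (Function.update p i a) b
      have hi_mem : i ∈ Finset.univ \ {j} := by
        simp [Finset.mem_sdiff, hij]
      have e2 : ∑ l ∈ Finset.univ \ {j}, Function.update p i a l
          = a + ∑ l ∈ (Finset.univ \ {j}) \ {i}, p l :=
        Finset.sum_update_of_mem hi_mem p a
      have hi_mem' : i ∈ Finset.univ.erase j := Finset.mem_erase.mpr ⟨hij, Finset.mem_univ i⟩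
      have e3 : ∑ l, p l = p j + ∑ l ∈ Finset.univ.erase j, p l :=
        (Finset.add_sum_erase _ p (Finset.mem_univ j)).symm
      have e4 : ∑ l ∈ Finset.univ.erase j, p l
          = p i + ∑ l ∈ (Finset.univ.erase j).erase i, p l :=
        (Finset.add_sum_erase _ p hi_mem').symm
      have hset : (Finset.univ \ {j} : Finset (Fin k)) \ {i}
          = (Finset.univ.erase j).erase i := by
        rw [Finset.sdiff_singleton_eq_erase, Finset.sdiff_singleton_eq_erase]
      rw [e1, e2, hset]
      rw [e3, e4] at hp1
      linarith
    have hcard' : (Finset.univ.filter (fun l => p' l ≠ 1 / (k:ℝ))).card ≤ N := by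
      have hione : a = 1/(k:ℝ) ∨ b = 1/(k:ℝ) := by
        rcases le_total (1/(k:ℝ)) (p i + p j - 1/(k:ℝ)) with h | h
        · left; rw [ha, min_eq_left h]
        · right; rw [hb, max_eq_left h]
      have hmem : ∀ (w : Fin k), w = i ∨ w = j → p w ≠ 1/(k:ℝ) →
          w ∈ Finset.univ.filter (fun l => p l ≠ 1 / (k:ℝ)) := by
        intro w _ hw
        simp only [Finset.mem_filter, Finset.mem_univ, true_and]
        exact hw
      rcases hione with hone | hone
      · have hsub : Finset.univ.filter (fun l => p' l ≠ 1 / (k:ℝ))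
            ⊆ (Finset.univ.filter (fun l => p l ≠ 1 / (k:ℝ))).erase i := by
          intro l hl
          simp only [Finset.mem_filter, Finset.mem_univ, true_and] at hl
          rcases eq_or_ne l i with rfl | hli
          · exact absurd (hp'i.trans hone) hl
          rcases eq_or_ne l j with rfl | hlj
          · exact Finset.mem_erase.mpr ⟨hij.symm, hmem _ (Or.inr rfl) hj.ne'⟩
          · rw [hp'l l hli hlj] at hl
            exact Finset.mem_erase.mpr ⟨hli, by
              simp only [Finset.mem_filter, Finset.mem_univ, true_and]
              exact hl⟩
        have himem : i ∈ Finset.univ.filter (fun l => p l ≠ 1 / (k:ℝ)) :=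
          hmem i (Or.inl rfl) hi.ne
        have := Finset.card_le_card hsub
        rw [Finset.card_erase_of_mem himem] at this
        omega
      · have hsub : Finset.univ.filter (fun l => p' l ≠ 1 / (k:ℝ))
            ⊆ (Finset.univ.filter (fun l => p l ≠ 1 / (k:ℝ))).erase j := by
          intro l hl
          simp only [Finset.mem_filter, Finset.mem_univ, true_and] at hl
          rcases eq_or_ne l j with rfl | hlj
          · exact absurd (hp'j.trans hone) hl
          rcases eq_or_ne l i with rfl | hli
          · exact Finset.mem_erase.mpr ⟨hij, hmem _ (Or.inl rfl) hi.ne⟩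
          · rw [hp'l l hli hlj] at hl
            exact Finset.mem_erase.mpr ⟨hlj, by
              simp only [Finset.mem_filter, Finset.mem_univ, true_and]
              exact hl⟩
        have hjmem : j ∈ Finset.univ.filter (fun l => p l ≠ 1 / (k:ℝ)) :=
          hmem j (Or.inr rfl) hj.ne'
        have := Finset.card_le_card hsub
        rw [Finset.card_erase_of_mem hjmem] at this
        omega
    exact le_trans step (ih p' hp'0 hp'1 hcard')

/-- Theorem: the probability of no full bin is maximized by the uniform
distribution. For counts `X i` of `n` i.i.d. draws from a categorical
distribution with probabilities `p 1, ..., p k`,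
`P(∀ i, X i < C) = ∑_{f : [n] → [k], #f⁻¹(i) ≤ C - 1 ∀ i} ∏_m p (f m)`,
and this is at most the corresponding value for the uniform distribution,
`∑_{f : #f⁻¹(i) ≤ C - 1 ∀ i} (1/k)^n`. -/
theorem prob_no_full_bin_le_uniform
    {Ω : Type*} [MeasurableSpace Ω] (P : Measure Ω) [IsProbabilityMeasure P]
    (n k C : ℕ) (hk : 1 ≤ k) (hC : 1 ≤ C) (D : Fin n → Ω → Fin k) (p : Fin k → ℝ)
    (hmeas : ∀ m, Measurable (D m))
    (hp0 : ∀ i, 0 ≤ p i) (hp1 : ∑ i, p i = 1)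
    (hlaw : ∀ m i, P {ω | D m ω = i} = ENNReal.ofReal (p i))
    (hindep : iIndepFun D P) :
    ((P {ω | ∀ i, binCount n k D i ω < C}).toReal =
      ∑ f ∈ (Finset.univ : Finset (Fin n → Fin k)).filter
          (fun f => ∀ i, (Finset.univ.filter fun m => f m = i).card < C),
        ∏ m, p (f m)) ∧
    (P {ω | ∀ i, binCount n k D i ω < C}).toReal ≤
      ∑ f ∈ (Finset.univ : Finset (Fin n → Fin k)).filter
          (fun f => ∀ i, (Finset.univ.filter fun m => f m = i).card < C),
        ((1 : ℝ) / k) ^ n := by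
  classical
  set A : Finset (Fin n → Fin k) := (Finset.univ : Finset (Fin n → Fin k)).filter
      (fun f => ∀ i, (Finset.univ.filter fun m => f m = i).card < C) with hA
  have hmeasEf : ∀ f : Fin n → Fin k, MeasurableSet {ω | ∀ m, D m ω = f m} := by
    intro f
    have : {ω | ∀ m, D m ω = f m} = ⋂ m, (D m) ⁻¹' {f m} := by
      ext ω
      simp [Set.mem_iInter, Set.mem_preimage]
    rw [this]
    exact MeasurableSet.iInter fun m => hmeas m (measurableSet_singleton _)
  have hEq : {ω | ∀ i, binCount n k D i ω < C} = ⋃ f ∈ A, {ω | ∀ m, D m ω = f m} := by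
    ext ω
    simp only [Set.mem_setOf_eq, Set.mem_iUnion]
    constructor
    · intro h
      refine ⟨fun m => D m ω, ?_, fun m => rfl⟩
      simp only [hA, Finset.mem_filter, Finset.mem_univ, true_and]
      intro i
      exact h i
    · rintro ⟨f, hf, hfm⟩ i
      simp only [hA, Finset.mem_filter, Finset.mem_univ, true_and] at hf
      have hfilter : (Finset.univ.filter fun m => D m ω = i)
          = (Finset.univ.filter fun m => f m = i) := by
        apply Finset.filter_congr
        intro m _
        rw [hfm m]
      show (Finset.univ.filter fun m => D m ω = i).card < C
      rw [hfilter]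
      exact hf i
  have hPf : ∀ f : Fin n → Fin k,
      P {ω | ∀ m, D m ω = f m} = ENNReal.ofReal (∏ m, p (f m)) := by
    intro f
    have h1 : {ω | ∀ m, D m ω = f m} = ⋂ m ∈ Finset.univ, (D m) ⁻¹' {f m} := by
      ext ω
      simp [Set.mem_iInter, Set.mem_preimage]
    rw [h1, hindep.meas_biInter (fun m _ => ⟨{f m}, measurableSet_singleton _, rfl⟩)]
    have hterm : ∀ m : Fin n, P ((D m) ⁻¹' {f m}) = ENNReal.ofReal (p (f m)) := by
      intro m
      have : (D m) ⁻¹' {f m} = {ω | D m ω = f m} := by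
        ext ω
        simp [Set.mem_preimage]
      rw [this]
      exact hlaw m (f m)
    rw [Finset.prod_congr rfl (fun m _ => hterm m),
      ← ENNReal.ofReal_prod_of_nonneg (fun m _ => hp0 (f m))]
  have hPE : P {ω | ∀ i, binCount n k D i ω < C}
      = ∑ f ∈ A, ENNReal.ofReal (∏ m, p (f m)) := by
    rw [hEq, measure_biUnion_finset ?_ (fun f _ => hmeasEf f)]
    · exact Finset.sum_congr rfl fun f _ => hPf f
    · intro f _ g _ hfg
      simp only [Function.onFun]
      rw [Set.disjoint_left]
      intro ω h1 h2
      apply hfg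
      funext m
      exact (h1 m).symm.trans (h2 m)
  have heq1 : (P {ω | ∀ i, binCount n k D i ω < C}).toReal = ∑ f ∈ A, ∏ m, p (f m) := by
    rw [hPE, ENNReal.toReal_sum (fun f _ => ENNReal.ofReal_ne_top)]
    exact Finset.sum_congr rfl fun f _ =>
      ENNReal.toReal_ofReal (Finset.prod_nonneg fun m _ => hp0 (f m))
  refine ⟨heq1, ?_⟩
  rw [heq1]
  have hbal := Fsum_balance n k C hk hC
    (Finset.univ.filter (fun l => p l ≠ 1 / (k:ℝ))).card p hp0 hp1 le_rfl
  have hFp : Fsum n k C p = ∑ f ∈ A, ∏ m, p (f m) := rfl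
  have hFu : Fsum n k C (fun _ => 1 / (k:ℝ)) = ∑ f ∈ A, ((1:ℝ)/k) ^ n := by
    rw [Fsum]
    apply Finset.sum_congr rfl
    intro f _
    rw [Finset.prod_const, Finset.card_univ, Fintype.card_fin]
  rw [hFp, hFu] at hbal
  exact hbal
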